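/- Let 𝒯 be a selfadjoint set (𝒯* = 𝒯) of bounded operators on a complex separable Hilbert space H and let {P_n}_{n∈ℕ} be a sequence of non-zero finite-rank orthogonal projections on H. Then the following four conditions are equivalent: (1) ‖A P_n − P_n A‖₁ / ‖P_n‖₁ → 0 for all A ∈ 𝒯; (2) ‖A P_n − P_n A‖₂ / ‖P_n‖₂ → 0 for all A ∈ 𝒯; (3) ‖(1 − P_n) A P_n‖₁ / ‖P_n‖₁ → 0 for all A ∈ 𝒯; (4) ‖(1 − P_n) A P_n‖₂ / ‖P_n‖₂ → 0 for all A ∈ 𝒯. In particular, {P_n} is a Følner sequence for 𝒯 if and only if any one of these conditions holds. -/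

import Mathlib

open Filter Topology
open scoped ComplexOrder

noncomputable section

variable {H : Type*} [NormedAddCommGroup H] [InnerProductSpace ℂ H] [CompleteSpace H]

/-- `P` is a finite-rank orthogonal projection on the Hilbert space `H`. -/
def IsFinRankProj (P : H →L[ℂ] H) : Prop :=
  IsIdempotentElem P ∧ IsSelfAdjoint P ∧ FiniteDimensional ℂ (LinearMap.range (P : H →ₗ[ℂ] H))

/-- The Hilbert–Schmidt norm of an operator, computed with respect to the Hilbert basis `b`
(for Hilbert–Schmidt operators it is independent of the choice of `b`). -/
def hsNorm {ι : Type*} (b : HilbertBasis ι ℂ H) (T : H →L[ℂ] H) : ℝ :=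
  Real.sqrt (∑' i, ‖T (b i)‖ ^ 2)

/-- The canonical trace of an operator, computed with respect to the Hilbert basis `b`
(for trace-class operators it is independent of the choice of `b`). -/
def trOp {ι : Type*} (b : HilbertBasis ι ℂ H) (T : H →L[ℂ] H) : ℂ :=
  ∑' i, (inner ℂ (b i) (T (b i)) : ℂ)

/-- `{P n}` is a Følner sequence (of non-zero finite-rank orthogonal projections)
for the set of operators `S ⊆ L(H)`. -/
def IsFolnerSeq {ι : Type*} (b : HilbertBasis ι ℂ H) (S : Set (H →L[ℂ] H))
    (P : ℕ → H →L[ℂ] H) : Prop :=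
  (∀ n, IsFinRankProj (P n) ∧ P n ≠ 0) ∧
  ∀ A ∈ S, Tendsto (fun n => hsNorm b (A * P n - P n * A) / hsNorm b (P n)) atTop (𝓝 0)

/-- A proper Følner sequence: an increasing Følner sequence converging strongly to `1`. -/
def IsProperFolnerSeq {ι : Type*} (b : HilbertBasis ι ℂ H) (S : Set (H →L[ℂ] H))
    (P : ℕ → H →L[ℂ] H) : Prop :=
  IsFolnerSeq b S P ∧ Monotone (fun n => LinearMap.range (P n : H →ₗ[ℂ] H)) ∧
    ∀ x : H, Tendsto (fun n => P n x) atTop (𝓝 x)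

/-- The trace-class norm `‖T‖₁ = Tr √(T*T)`, computed with respect to the Hilbert basis `b`. -/
def trNorm {ι : Type*} (b : HilbertBasis ι ℂ H) (T : H →L[ℂ] H) : ℝ :=
  (trOp b (cfc Real.sqrt (star T * T))).re

open scoped InnerProductSpace NNReal
set_option linter.unusedSectionVars false
set_option maxHeartbeats 1000000

namespace FolnerAux

variable {H : Type*} [NormedAddCommGroup H] [InnerProductSpace ℂ H] [CompleteSpace H]

/-- rank-one operator `x ↦ ⟪v, x⟫ • u`. -/
def rk1 (u v : H) : H →L[ℂ] H := (innerSL ℂ v).smulRight u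

@[simp] lemma rk1_apply (u v x : H) : rk1 u v x = ⟪v, x⟫_ℂ • u := rfl

lemma star_rk1 (u v : H) : star (rk1 u v) = rk1 v u := by
  rw [ContinuousLinearMap.star_eq_adjoint]
  ext x
  apply ext_inner_left ℂ
  intro y
  rw [ContinuousLinearMap.adjoint_inner_right]
  simp [inner_smul_right, inner_smul_left, mul_comm]

lemma rk1_comp_rk1 (u v u' v' : H) : rk1 u v * rk1 u' v' = ⟪v, u'⟫_ℂ • rk1 u v' := by
  ext x
  simp [ContinuousLinearMap.mul_apply, inner_smul_right, smul_smul, mul_comm]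

lemma orthonormal_inner_self {α : Type*} {v : α → H} (hv : Orthonormal ℂ v) (k : α) :
    ⟪v k, v k⟫_ℂ = 1 := by
  rw [inner_self_eq_norm_sq_to_K, hv.1 k]; norm_num

/-- A singular value decomposition of a (finite-rank) operator. -/
structure SVD (T : H →L[ℂ] H) where
  κ : Type
  fin : Fintype κ
  s : κ → ℝ
  spos : ∀ k, 0 < s k
  e : κ → H
  f : κ → H
  he : Orthonormal ℂ e
  hf : Orthonormal ℂ f
  repr : T = ∑ k : κ, ((s k : ℂ) • rk1 (f k) (e k) : H →L[ℂ] H)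

attribute [instance] SVD.fin

namespace SVD

variable {T : H →L[ℂ] H} (sv : SVD T)

lemma apply (x : H) : T x = ∑ k, (sv.s k : ℂ) • ⟪sv.e k, x⟫_ℂ • sv.f k := by
  conv_lhs => rw [sv.repr]
  simp

lemma apply_e (k : sv.κ) : T (sv.e k) = (sv.s k : ℂ) • sv.f k := by
  classical
  rw [sv.apply (sv.e k), Finset.sum_eq_single k]
  · rw [orthonormal_inner_self sv.he]; simp
  · intro j _ hj
    rw [sv.he.2 hj]; simp
  · simp

def starSVD (sv : SVD T) : SVD (star T) :=
  { κ := sv.κ, fin := sv.fin, s := sv.s, spos := sv.spos, e := sv.f, f := sv.e,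
    he := sv.hf, hf := sv.he,
    repr := by
      conv_lhs => rw [sv.repr]
      rw [star_sum]
      congr 1; funext k
      rw [star_smul, star_rk1]
      simp }

lemma star_apply_f (k : sv.κ) : star T (sv.f k) = (sv.s k : ℂ) • sv.e k := by
  exact sv.starSVD.apply_e k

lemma mem_range_f (k : sv.κ) : sv.f k ∈ LinearMap.range (T : H →ₗ[ℂ] H) := by
  have h := sv.apply_e k
  have hs : (sv.s k : ℂ) ≠ 0 := by
    exact_mod_cast (ne_of_gt (sv.spos k))
  refine ⟨(sv.s k : ℂ)⁻¹ • sv.e k, ?_⟩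
  rw [map_smul, ContinuousLinearMap.coe_coe, h, smul_smul, inv_mul_cancel₀ hs, one_smul]

lemma s_le_norm (k : sv.κ) : sv.s k ≤ ‖T‖ := by
  have h := sv.apply_e k
  have : ‖T (sv.e k)‖ = sv.s k := by
    rw [h, norm_smul]
    simp [sv.hf.1 k, abs_of_pos (sv.spos k)]
  calc sv.s k = ‖T (sv.e k)‖ := this.symm
    _ ≤ ‖T‖ * ‖sv.e k‖ := T.le_opNorm _
    _ = ‖T‖ := by rw [sv.he.1 k, mul_one]

lemma star_mul_self :
    star T * T = ∑ k : sv.κ, ((sv.s k ^ 2 : ℝ) : ℂ) • rk1 (sv.e k) (sv.e k) := by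
  classical
  ext x
  rw [ContinuousLinearMap.mul_apply, sv.apply x, map_sum]
  rw [ContinuousLinearMap.sum_apply]
  congr 1; funext k
  rw [map_smul, map_smul, sv.star_apply_f k]
  simp only [ContinuousLinearMap.smul_apply, rk1_apply, smul_smul]
  congr 1
  push_cast
  ring

end SVD

section Trace

variable {T : H →L[ℂ] H} {ι : Type*} (b : HilbertBasis ι ℂ H)

lemma mul_conj_self (z : ℂ) : z * (starRingEnd ℂ) z = ((‖z‖ ^ 2 : ℝ) : ℂ) := by
  rw [Complex.mul_conj, Complex.normSq_eq_norm_sq]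

lemma conj_mul_self (z : ℂ) : (starRingEnd ℂ) z * z = ((‖z‖ ^ 2 : ℝ) : ℂ) := by
  rw [mul_comm]; exact mul_conj_self z

lemma inner_mul_inner_self (x y : H) : ⟪x, y⟫_ℂ * ⟪y, x⟫_ℂ = ((‖⟪x, y⟫_ℂ‖ ^ 2 : ℝ) : ℂ) := by
  rw [← inner_conj_symm y x]
  exact mul_conj_self _

lemma summable_inner_rk1 (u v : H) : Summable (fun i => (inner ℂ (b i) ((rk1 u v) (b i)) : ℂ)) := by
  have h := b.summable_inner_mul_inner v u
  refine h.congr fun i => ?_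
  simp [inner_smul_right, mul_comm]

lemma tsum_inner_rk1 (u v : H) : ∑' i, (inner ℂ (b i) ((rk1 u v) (b i)) : ℂ) = ⟪v, u⟫_ℂ := by
  rw [tsum_congr (f := fun i => (inner ℂ (b i) ((rk1 u v) (b i)) : ℂ))
    (g := fun i => ⟪v, b i⟫_ℂ * ⟪b i, u⟫_ℂ) (fun i => by simp [inner_smul_right, mul_comm])]
  exact b.tsum_inner_mul_inner v u

lemma trOp_rk1 (u v : H) : trOp b (rk1 u v) = ⟪v, u⟫_ℂ := tsum_inner_rk1 b u v

lemma trOp_sum_smul_rk1 {κ : Type*} [Fintype κ] (c : κ → ℂ) (u v : κ → H) :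
    trOp b (∑ k, c k • rk1 (u k) (v k)) = ∑ k, c k * ⟪v k, u k⟫_ℂ := by
  unfold trOp
  have h1 : ∀ i : ι, (inner ℂ (b i) ((∑ k, c k • rk1 (u k) (v k)) (b i)) : ℂ)
      = ∑ k, c k * (inner ℂ (b i) ((rk1 (u k) (v k)) (b i)) : ℂ) := by
    intro i
    rw [ContinuousLinearMap.sum_apply, inner_sum]
    congr 1; funext k
    simp [inner_smul_right]
  rw [tsum_congr h1, Summable.tsum_finsetSum (fun k _ => (summable_inner_rk1 b (u k) (v k)).mul_left (c k))]
  congr 1; funext k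
  rw [tsum_mul_left, tsum_inner_rk1]

lemma summable_inner_sq (x : H) : Summable (fun i => ‖⟪x, b i⟫_ℂ‖ ^ 2) := by
  have h := b.summable_inner_mul_inner x x
  have h2 : Summable (fun i => ((‖⟪x, b i⟫_ℂ‖ ^ 2 : ℝ) : ℂ)) :=
    h.congr fun i => inner_mul_inner_self x (b i)
  exact Complex.summable_ofReal.mp h2

lemma tsum_inner_sq (x : H) : ∑' i, ‖⟪x, b i⟫_ℂ‖ ^ 2 = ‖x‖ ^ 2 := by
  apply Complex.ofReal_injective
  rw [Complex.ofReal_tsum]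
  calc ∑' i, ((‖⟪x, b i⟫_ℂ‖ ^ 2 : ℝ) : ℂ)
      = ∑' i, ⟪x, b i⟫_ℂ * ⟪b i, x⟫_ℂ :=
        tsum_congr fun i => (inner_mul_inner_self x (b i)).symm
    _ = ⟪x, x⟫_ℂ := b.tsum_inner_mul_inner x x
    _ = ((‖x‖ ^ 2 : ℝ) : ℂ) := by rw [inner_self_eq_norm_sq_to_K]; norm_num

lemma orthonormal_norm_sq_sum {κ : Type*} [Fintype κ] {v : κ → H} (hv : Orthonormal ℂ v)
    (l : κ → ℂ) : ‖∑ k, l k • v k‖ ^ 2 = ∑ k, ‖l k‖ ^ 2 := by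
  apply Complex.ofReal_injective
  have h := hv.inner_sum l l Finset.univ
  calc ((‖∑ k, l k • v k‖ ^ 2 : ℝ) : ℂ)
      = ⟪∑ k, l k • v k, ∑ k, l k • v k⟫_ℂ := by rw [inner_self_eq_norm_sq_to_K]; norm_num
    _ = ∑ k, (starRingEnd ℂ) (l k) * l k := h
    _ = ∑ k, ((‖l k‖ ^ 2 : ℝ) : ℂ) := by
        refine Finset.sum_congr rfl fun k _ => ?_
        exact conj_mul_self (l k)
    _ = ((∑ k, ‖l k‖ ^ 2 : ℝ) : ℂ) := by rw [Complex.ofReal_sum]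

namespace SVD

lemma sum_rk1_apply {κ : Type*} [Fintype κ] (c : κ → ℂ) (u v : κ → H) (y : H) :
    (∑ k, c k • rk1 (u k) (v k)) y = ∑ k, (c k * ⟪v k, y⟫_ℂ) • u k := by
  rw [ContinuousLinearMap.sum_apply]
  congr 1; funext k
  simp [smul_smul]

set_option synthInstance.maxHeartbeats 1000000 in
lemma cfc_sqrt (sv : SVD T) : cfc Real.sqrt (star T * T)
    = ∑ k, ((sv.s k : ℝ) : ℂ) • rk1 (sv.e k) (sv.e k) := by
  classical
  set R : H →L[ℂ] H := ∑ k, ((sv.s k : ℝ) : ℂ) • rk1 (sv.e k) (sv.e k) with hR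
  have hRapp : ∀ y, R y = ∑ k, ((sv.s k : ℂ) * ⟪sv.e k, y⟫_ℂ) • sv.e k := fun y =>
    sum_rk1_apply _ _ _ y
  have hRR : R * R = star T * T := by
    rw [sv.star_mul_self]
    ext x
    rw [ContinuousLinearMap.mul_apply, hRapp, hRapp x, sum_rk1_apply]
    congr 1; funext k
    rw [sv.he.inner_right_fintype (fun k => ((sv.s k : ℂ) * ⟪sv.e k, x⟫_ℂ)) k]
    congr 1
    push_cast
    ring
  have hRsa : IsSelfAdjoint R := by
    rw [IsSelfAdjoint, hR, star_sum]
    congr 1; funext k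
    rw [star_smul, star_rk1]
    simp
  have hRpos : (0 : H →L[ℂ] H) ≤ R := by
    rw [ContinuousLinearMap.nonneg_iff_isPositive]
    refine ⟨ContinuousLinearMap.isSelfAdjoint_iff_isSymmetric.mp hRsa, fun x => ?_⟩
    have hre : R.reApplyInnerSelf x = ∑ k, sv.s k * ‖⟪sv.e k, x⟫_ℂ‖ ^ 2 := by
      show Complex.re ⟪R x, x⟫_ℂ = _
      rw [hRapp, sum_inner, Complex.re_sum]
      congr 1; funext k
      rw [inner_smul_left, map_mul, Complex.conj_ofReal, mul_assoc, conj_mul_self,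
        ← Complex.ofReal_mul, Complex.ofReal_re]
    rw [hre]
    exact Finset.sum_nonneg fun k _ => mul_nonneg (sv.spos k).le (sq_nonneg _)
  have hpos : (0 : H →L[ℂ] H) ≤ star T * T := star_mul_self_nonneg T
  calc cfc Real.sqrt (star T * T)
      = cfc (fun x : ℝ => ((NNReal.sqrt x.toNNReal : ℝ≥0) : ℝ)) (star T * T) := by
        congr 1; funext x; unfold Real.sqrt; rfl
    _ = cfc NNReal.sqrt (star T * T) := (cfc_nnreal_eq_real _ _ hpos).symm
    _ = CFC.sqrt (star T * T) := CFC.sqrt_eq_cfc.symm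
    _ = R := CFC.sqrt_unique hRR hRpos

lemma trNorm_eq (sv : SVD T) : trNorm b T = ∑ k, sv.s k := by
  unfold trNorm
  rw [sv.cfc_sqrt, trOp_sum_smul_rk1]
  have h1 : ∀ k, ((sv.s k : ℝ) : ℂ) * ⟪sv.e k, sv.e k⟫_ℂ = ((sv.s k : ℝ) : ℂ) := by
    intro k; rw [orthonormal_inner_self sv.he, mul_one]
  rw [Finset.sum_congr rfl (fun k _ => h1 k), ← Complex.ofReal_sum, Complex.ofReal_re]

lemma trNorm_nonneg (sv : SVD T) : 0 ≤ trNorm b T := by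
  rw [sv.trNorm_eq b]
  exact Finset.sum_nonneg fun k _ => (sv.spos k).le

lemma norm_apply_sq (sv : SVD T) (x : H) :
    ‖T x‖ ^ 2 = ∑ k, sv.s k ^ 2 * ‖⟪sv.e k, x⟫_ℂ‖ ^ 2 := by
  have h : T x = ∑ k, ((sv.s k : ℂ) * ⟪sv.e k, x⟫_ℂ) • sv.f k := by
    rw [sv.apply x]; congr 1; funext k; rw [smul_smul]
  rw [h, orthonormal_norm_sq_sum sv.hf]
  congr 1; funext k
  rw [norm_mul, mul_pow, Complex.norm_real, Real.norm_eq_abs, sq_abs]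

lemma summable_hs (sv : SVD T) : Summable (fun i => ‖T (b i)‖ ^ 2) := by
  refine (summable_sum (fun k (_ : k ∈ Finset.univ) =>
    ((summable_inner_sq b (sv.e k)).mul_left (sv.s k ^ 2)))).congr fun i => ?_
  rw [sv.norm_apply_sq]

lemma tsum_hs (sv : SVD T) : ∑' i, ‖T (b i)‖ ^ 2 = ∑ k, sv.s k ^ 2 := by
  rw [tsum_congr (fun i => sv.norm_apply_sq (b i)),
    Summable.tsum_finsetSum (fun k _ => ((summable_inner_sq b (sv.e k)).mul_left (sv.s k ^ 2)))]
  congr 1; funext k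
  rw [tsum_mul_left, tsum_inner_sq, sv.he.1 k]
  norm_num

lemma hsNorm_eq (sv : SVD T) : hsNorm b T = Real.sqrt (∑ k, sv.s k ^ 2) := by
  unfold hsNorm; rw [sv.tsum_hs]

lemma hsNorm_sq (sv : SVD T) : hsNorm b T ^ 2 = ∑ k, sv.s k ^ 2 := by
  rw [sv.hsNorm_eq b, Real.sq_sqrt (Finset.sum_nonneg fun k _ => sq_nonneg _)]

end SVD

lemma hsNorm_nonneg {ι' : Type*} (b' : HilbertBasis ι' ℂ H) (X : H →L[ℂ] H) :
    0 ≤ hsNorm b' X := Real.sqrt_nonneg _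

end Trace

section Chunk3

variable {T X X₁ X₂ B : H →L[ℂ] H} {ι : Type*} (b : HilbertBasis ι ℂ H)

/-- discrete Cauchy-Schwarz in ≤-sqrt form -/
lemma sum_mul_le_sqrt_mul_sqrt {M : Type*} [Fintype M] (f g : M → ℝ)
    (hf : ∀ m, 0 ≤ f m) (hg : ∀ m, 0 ≤ g m) :
    ∑ m, f m * g m ≤ Real.sqrt (∑ m, f m ^ 2) * Real.sqrt (∑ m, g m ^ 2) := by
  have h := Finset.sum_mul_sq_le_sq_mul_sq Finset.univ f g
  have h0 : 0 ≤ ∑ m, f m * g m :=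
    Finset.sum_nonneg fun m _ => mul_nonneg (hf m) (hg m)
  calc ∑ m, f m * g m = Real.sqrt ((∑ m, f m * g m) ^ 2) := (Real.sqrt_sq h0).symm
    _ ≤ Real.sqrt ((∑ m, f m ^ 2) * ∑ m, g m ^ 2) := Real.sqrt_le_sqrt h
    _ = _ := Real.sqrt_mul (Finset.sum_nonneg fun m _ => sq_nonneg _) _

namespace SVD

lemma card_le_finrank (sv : SVD T) [FiniteDimensional ℂ (LinearMap.range (T : H →ₗ[ℂ] H))] :
    Fintype.card sv.κ ≤ Module.finrank ℂ (LinearMap.range (T : H →ₗ[ℂ] H)) := by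
  classical
  have hg : Orthonormal ℂ (fun k => (⟨sv.f k, sv.mem_range_f k⟩ : LinearMap.range (T : H →ₗ[ℂ] H))) := by
    rw [orthonormal_iff_ite]
    intro j l
    have := orthonormal_iff_ite.mp sv.hf j l
    rwa [Submodule.coe_inner]
  exact hg.linearIndependent.fintype_card_le_finrank

/-- the key duality-type bound -/
lemma sum_inner_le (sv : SVD T) {M : Type*} [Fintype M] {u v : M → H}
    (hu : Orthonormal ℂ u) (hv : Orthonormal ℂ v) (B : H →L[ℂ] H) :
    ∑ m, ‖⟪u m, B (T (v m))⟫_ℂ‖ ≤ ‖B‖ * ∑ k, sv.s k := by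
  have hterm : ∀ m, ‖⟪u m, B (T (v m))⟫_ℂ‖
      ≤ ∑ k, sv.s k * (‖⟪sv.e k, v m⟫_ℂ‖ * ‖⟪u m, B (sv.f k)⟫_ℂ‖) := by
    intro m
    have hTv : T (v m) = ∑ k, ((sv.s k : ℂ) * ⟪sv.e k, v m⟫_ℂ) • sv.f k := by
      rw [sv.apply (v m)]; congr 1; funext k; rw [smul_smul]
    have : ⟪u m, B (T (v m))⟫_ℂ = ∑ k, (sv.s k : ℂ) * ⟪sv.e k, v m⟫_ℂ * ⟪u m, B (sv.f k)⟫_ℂ := by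
      rw [hTv, map_sum, inner_sum]
      congr 1; funext k
      rw [map_smul, inner_smul_right]
    rw [this]
    refine (norm_sum_le _ _).trans ?_
    refine le_of_eq (Finset.sum_congr rfl fun k _ => ?_)
    rw [norm_mul, norm_mul, Complex.norm_real, Real.norm_eq_abs, abs_of_pos (sv.spos k), mul_assoc]
  calc ∑ m, ‖⟪u m, B (T (v m))⟫_ℂ‖
      ≤ ∑ m, ∑ k, sv.s k * (‖⟪sv.e k, v m⟫_ℂ‖ * ‖⟪u m, B (sv.f k)⟫_ℂ‖) :=
        Finset.sum_le_sum fun m _ => hterm m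
    _ = ∑ k, sv.s k * ∑ m, ‖⟪sv.e k, v m⟫_ℂ‖ * ‖⟪u m, B (sv.f k)⟫_ℂ‖ := by
        rw [Finset.sum_comm]
        congr 1; funext k
        rw [Finset.mul_sum]
    _ ≤ ∑ k, sv.s k * ‖B‖ := by
        refine Finset.sum_le_sum fun k _ => ?_
        refine mul_le_mul_of_nonneg_left ?_ (sv.spos k).le
        calc ∑ m, ‖⟪sv.e k, v m⟫_ℂ‖ * ‖⟪u m, B (sv.f k)⟫_ℂ‖
            ≤ Real.sqrt (∑ m, ‖⟪sv.e k, v m⟫_ℂ‖ ^ 2) * Real.sqrt (∑ m, ‖⟪u m, B (sv.f k)⟫_ℂ‖ ^ 2) :=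
              sum_mul_le_sqrt_mul_sqrt _ _ (fun m => norm_nonneg _) (fun m => norm_nonneg _)
          _ ≤ Real.sqrt (‖sv.e k‖ ^ 2) * Real.sqrt (‖B (sv.f k)‖ ^ 2) := by
              refine mul_le_mul (Real.sqrt_le_sqrt ?_) (Real.sqrt_le_sqrt ?_)
                (Real.sqrt_nonneg _) (Real.sqrt_nonneg _)
              · refine le_of_eq_of_le (Finset.sum_congr rfl fun m _ => ?_)
                  (hv.sum_inner_products_le (sv.e k))
                rw [norm_inner_symm]
              · exact hu.sum_inner_products_le (B (sv.f k))
          _ = ‖sv.e k‖ * ‖B (sv.f k)‖ := by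
              rw [Real.sqrt_sq (norm_nonneg _), Real.sqrt_sq (norm_nonneg _)]
          _ ≤ 1 * (‖B‖ * ‖sv.f k‖) := by
              refine mul_le_mul (le_of_eq (sv.he.1 k)) (B.le_opNorm _) (norm_nonneg _) zero_le_one
          _ = ‖B‖ := by rw [sv.hf.1 k, one_mul, mul_one]
    _ = ‖B‖ * ∑ k, sv.s k := by rw [← Finset.sum_mul, mul_comm]

lemma s_eq_inner (sv : SVD T) (k : sv.κ) : (sv.s k : ℂ) = ⟪sv.f k, T (sv.e k)⟫_ℂ := by
  rw [sv.apply_e k, inner_smul_right, orthonormal_inner_self sv.hf, mul_one]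

end SVD

lemma trNorm_mul_le (svX : SVD X) (svBX : SVD (B * X)) :
    trNorm b (B * X) ≤ ‖B‖ * trNorm b X := by
  rw [svBX.trNorm_eq b, svX.trNorm_eq b]
  have h1 : ∀ j, svBX.s j = ‖⟪svBX.f j, B (X (svBX.e j))⟫_ℂ‖ := by
    intro j
    have := svBX.s_eq_inner j
    rw [ContinuousLinearMap.mul_apply] at this
    rw [← this, Complex.norm_real, Real.norm_eq_abs, abs_of_pos (svBX.spos j)]
  rw [Finset.sum_congr rfl fun j _ => h1 j]
  exact svX.sum_inner_le svBX.hf svBX.he B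

lemma hsNorm_mul_le (svX : SVD X) (B : H →L[ℂ] H) :
    hsNorm b (B * X) ≤ ‖B‖ * hsNorm b X := by
  unfold hsNorm
  have hle : ∀ i, ‖(B * X) (b i)‖ ^ 2 ≤ ‖B‖ ^ 2 * ‖X (b i)‖ ^ 2 := by
    intro i
    rw [ContinuousLinearMap.mul_apply, ← mul_pow]
    exact pow_le_pow_left₀ (norm_nonneg _) (B.le_opNorm _) 2
  have hsum : Summable (fun i => ‖B‖ ^ 2 * ‖X (b i)‖ ^ 2) := (svX.summable_hs b).mul_left _
  have h2 : Summable (fun i => ‖(B * X) (b i)‖ ^ 2) :=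
    Summable.of_nonneg_of_le (fun i => sq_nonneg _) hle hsum
  calc Real.sqrt (∑' i, ‖(B * X) (b i)‖ ^ 2)
      ≤ Real.sqrt (∑' i, ‖B‖ ^ 2 * ‖X (b i)‖ ^ 2) :=
        Real.sqrt_le_sqrt (Summable.tsum_le_tsum hle h2 hsum)
    _ = ‖B‖ * Real.sqrt (∑' i, ‖X (b i)‖ ^ 2) := by
        rw [tsum_mul_left, Real.sqrt_mul (sq_nonneg _), Real.sqrt_sq (norm_nonneg _)]

lemma orthonormal_sum_elim {κ₁ κ₂ : Type*} {v₁ : κ₁ → H} {v₂ : κ₂ → H}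
    (h₁ : Orthonormal ℂ v₁) (h₂ : Orthonormal ℂ v₂)
    (hcross : ∀ j l, ⟪v₁ j, v₂ l⟫_ℂ = 0) : Orthonormal ℂ (Sum.elim v₁ v₂) := by
  classical
  rw [orthonormal_iff_ite]
  rintro (j | j) (l | l)
  · have := orthonormal_iff_ite.mp h₁ j l
    simpa using this
  · simpa using hcross j l
  · have : ⟪v₂ j, v₁ l⟫_ℂ = 0 := by
      rw [← inner_conj_symm (v₂ j) (v₁ l), hcross l j, map_zero]
    simpa using this
  · have := orthonormal_iff_ite.mp h₂ j l
    simpa using this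

set_option synthInstance.maxHeartbeats 1000000 in
/-- union of two SVDs with orthogonal ranges and cokernels -/
def SVD.union (sv₁ : SVD X₁) (sv₂ : SVD X₂)
    (h12 : X₁ * star X₂ = 0) (h21 : star X₁ * X₂ = 0) : SVD (X₁ + X₂) where
  κ := sv₁.κ ⊕ sv₂.κ
  fin := inferInstance
  s := Sum.elim sv₁.s sv₂.s
  spos := by rintro (k | k); exacts [sv₁.spos k, sv₂.spos k]
  e := Sum.elim sv₁.e sv₂.e
  f := Sum.elim sv₁.f sv₂.f
  he := by
    refine orthonormal_sum_elim sv₁.he sv₂.he fun j l => ?_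
    have he1 : sv₁.e j = ((sv₁.s j : ℂ))⁻¹ • star X₁ (sv₁.f j) := by
      rw [sv₁.star_apply_f j, smul_smul, inv_mul_cancel₀, one_smul]
      exact_mod_cast (sv₁.spos j).ne'
    have he2 : sv₂.e l = ((sv₂.s l : ℂ))⁻¹ • star X₂ (sv₂.f l) := by
      rw [sv₂.star_apply_f l, smul_smul, inv_mul_cancel₀, one_smul]
      exact_mod_cast (sv₂.spos l).ne'
    rw [he1, he2, inner_smul_left, inner_smul_right]
    have : ⟪star X₁ (sv₁.f j), star X₂ (sv₂.f l)⟫_ℂ = 0 := by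
      rw [ContinuousLinearMap.star_eq_adjoint, ContinuousLinearMap.adjoint_inner_left,
        ← ContinuousLinearMap.mul_apply, h12]
      simp
    rw [this, mul_zero, mul_zero]
  hf := by
    refine orthonormal_sum_elim sv₁.hf sv₂.hf fun j l => ?_
    have hf1 : sv₁.f j = ((sv₁.s j : ℂ))⁻¹ • X₁ (sv₁.e j) := by
      rw [sv₁.apply_e j, smul_smul, inv_mul_cancel₀, one_smul]
      exact_mod_cast (sv₁.spos j).ne'
    have hf2 : sv₂.f l = ((sv₂.s l : ℂ))⁻¹ • X₂ (sv₂.e l) := by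
      rw [sv₂.apply_e l, smul_smul, inv_mul_cancel₀, one_smul]
      exact_mod_cast (sv₂.spos l).ne'
    rw [hf1, hf2, inner_smul_left, inner_smul_right]
    have : ⟪X₁ (sv₁.e j), X₂ (sv₂.e l)⟫_ℂ = 0 := by
      rw [← ContinuousLinearMap.adjoint_inner_right,
        ← ContinuousLinearMap.star_eq_adjoint, ← ContinuousLinearMap.mul_apply, h21]
      simp
    rw [this, mul_zero, mul_zero]
  repr := by
    conv_lhs => rw [sv₁.repr, sv₂.repr]
    rw [Fintype.sum_sum_type]
    congr 1 <;> (congr 1; funext k; simp)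

end Chunk3
section Chunk4

variable {ι : Type*} (b : HilbertBasis ι ℂ H)

/-- negation of an SVD -/
def SVD.neg {X : H →L[ℂ] H} (sv : SVD X) : SVD (-X) where
  κ := sv.κ
  fin := sv.fin
  s := sv.s
  spos := sv.spos
  e := sv.e
  f := fun k => -sv.f k
  he := sv.he
  hf := by
    classical
    rw [orthonormal_iff_ite]
    intro j l
    rw [inner_neg_neg]
    exact orthonormal_iff_ite.mp sv.hf j l
  repr := by
    have h1 : ∀ k : sv.κ, ((sv.s k : ℂ) • rk1 (-sv.f k) (sv.e k) : H →L[ℂ] H)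
        = -((sv.s k : ℂ) • rk1 (sv.f k) (sv.e k)) := by
      intro k; ext x; simp
    rw [Finset.sum_congr rfl (fun k _ => h1 k), Finset.sum_neg_distrib, neg_inj]
    exact sv.repr

/-- every finite-rank operator admits an SVD -/
theorem exists_svd (T : H →L[ℂ] H) (hfin : FiniteDimensional ℂ (LinearMap.range (T : H →ₗ[ℂ] H))) :
    Nonempty (SVD T) := by
  classical
  set S : H →L[ℂ] H := star T * T with hSdef
  have hSsa : IsSelfAdjoint S := IsSelfAdjoint.star_mul_self T
  have hSsym : ∀ x y : H, ⟪S x, y⟫_ℂ = ⟪x, S y⟫_ℂ :=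
    (ContinuousLinearMap.isSelfAdjoint_iff_isSymmetric.mp hSsa)
  -- range S is finite dimensional
  have hrange_le : LinearMap.range (S : H →ₗ[ℂ] H) ≤
      Submodule.map ((star T : H →L[ℂ] H) : H →ₗ[ℂ] H) (LinearMap.range (T : H →ₗ[ℂ] H)) := by
    rintro x ⟨y, rfl⟩
    exact ⟨T y, ⟨y, rfl⟩, rfl⟩
  haveI : FiniteDimensional ℂ
      (Submodule.map ((star T : H →L[ℂ] H) : H →ₗ[ℂ] H) (LinearMap.range (T : H →ₗ[ℂ] H))) :=
    Module.Finite.map _ _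
  set V : Submodule ℂ H := LinearMap.range (S : H →ₗ[ℂ] H) with hVdef
  haveI hVfin : FiniteDimensional ℂ V := Submodule.finiteDimensional_of_le hrange_le
  have hSV : ∀ x : H, S x ∈ V := fun x => ⟨x, rfl⟩
  set Sv : V →ₗ[ℂ] V := (S : H →ₗ[ℂ] H).restrict (fun x _ => hSV x) with hSvdef
  have hSvcoe : ∀ x : V, (Sv x : H) = S (x : H) := fun x => rfl
  have hsymm : Sv.IsSymmetric := by
    intro x y
    rw [Submodule.coe_inner, Submodule.coe_inner, hSvcoe, hSvcoe]
    exact hSsym _ _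
  set n := Module.finrank ℂ V with hn
  set g : OrthonormalBasis (Fin n) ℂ V := hsymm.eigenvectorBasis rfl with hg
  set μ : Fin n → ℝ := hsymm.eigenvalues rfl with hμdef
  have heig : ∀ i, Sv (g i) = (μ i : ℂ) • g i := by
    intro i
    have h := hsymm.hasEigenvector_eigenvectorBasis (rfl : Module.finrank ℂ V = n) i
    exact Module.End.mem_eigenspace_iff.mp h.1
  have hgH : ∀ i, S ((g i : V) : H) = (μ i : ℂ) • ((g i : V) : H) := by
    intro i
    rw [← hSvcoe, heig i]
    rfl
  have hgon : Orthonormal ℂ (fun i => ((g i : V) : H)) := by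
    rw [orthonormal_iff_ite]
    intro i j
    have := orthonormal_iff_ite.mp g.orthonormal i j
    rwa [Submodule.coe_inner] at this
  have hμ : ∀ i, μ i = ‖T ((g i : V) : H)‖ ^ 2 := by
    intro i
    apply Complex.ofReal_injective
    have h1 : ⟪((g i : V) : H), S ((g i : V) : H)⟫_ℂ = (μ i : ℂ) := by
      rw [hgH i, inner_smul_right, orthonormal_inner_self hgon, mul_one]
    have h2 : ⟪((g i : V) : H), S ((g i : V) : H)⟫_ℂ = ((‖T ((g i : V) : H)‖ ^ 2 : ℝ) : ℂ) := by
      have : S ((g i : V) : H) = (ContinuousLinearMap.adjoint T) (T ((g i : V) : H)) := by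
        rw [hSdef, ContinuousLinearMap.mul_apply, ContinuousLinearMap.star_eq_adjoint]
      rw [this, ContinuousLinearMap.adjoint_inner_right, inner_self_eq_norm_sq_to_K]
      norm_cast
    rw [← h1, h2]
  -- operator identity for S
  have hSapp : ∀ z : H, S z = ∑ i, ((μ i : ℂ) * ⟪((g i : V) : H), z⟫_ℂ) • ((g i : V) : H) := by
    intro z
    have hw : z - (V.orthogonalProjection z : H) ∈ Vᗮ :=
      Submodule.sub_starProjection_mem_orthogonal z
    have hSw : S (z - (V.orthogonalProjection z : H)) = 0 := by
      set w := z - (V.orthogonalProjection z : H)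
      have hz0 : ⟪S (S w), w⟫_ℂ = 0 := (Submodule.mem_orthogonal V w).mp hw _ (hSV _)
      have : ⟪S w, S w⟫_ℂ = 0 := by
        rw [hSsym w (S w), ← inner_conj_symm w (S (S w)), hz0, map_zero]
      rwa [inner_self_eq_zero] at this
    have hz : S z = S ((V.orthogonalProjection z : V) : H) := by
      conv_lhs => rw [show z = (V.orthogonalProjection z : H)
        + (z - (V.orthogonalProjection z : H)) by abel]
      rw [map_add, hSw, add_zero]
    have hPz : ((V.orthogonalProjection z : V) : H)
        = ∑ i, ⟪((g i : V) : H), z⟫_ℂ • ((g i : V) : H) := by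
      conv_lhs => rw [← g.sum_repr' (V.orthogonalProjection z)]
      rw [AddSubmonoidClass.coe_finset_sum]
      refine Finset.sum_congr rfl fun i _ => ?_
      rw [Submodule.coe_smul]
      congr 1
      rw [Submodule.inner_orthogonalProjection_eq_of_mem_left]
    rw [hz, hPz, map_sum]
    refine Finset.sum_congr rfl fun i _ => ?_
    rw [map_smul, hgH i, smul_smul, mul_comm]
  -- construct the SVD
  have hμnn : ∀ i, 0 ≤ μ i := fun i => (hμ i).symm ▸ sq_nonneg _
  refine ⟨⟨Subtype (fun i : Fin n => ¬ (μ i = 0)), inferInstance,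
    fun k => Real.sqrt (μ k.1),
    fun k => Real.sqrt_pos.mpr (lt_of_le_of_ne (hμnn k.1) (Ne.symm k.2)),
    fun k => ((g k.1 : V) : H),
    fun k => ((Real.sqrt (μ k.1) : ℂ))⁻¹ • T ((g k.1 : V) : H),
    hgon.comp _ Subtype.val_injective, ?_, ?_⟩⟩
  · -- orthonormality of f
    have hTT : ∀ i j : Fin n, ⟪T ((g i : V) : H), T ((g j : V) : H)⟫_ℂ
        = if i = j then (μ j : ℂ) else 0 := by
      intro i j
      have : ⟪T ((g i : V) : H), T ((g j : V) : H)⟫_ℂ = ⟪((g i : V) : H), S ((g j : V) : H)⟫_ℂ := by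
        have hS2 : S ((g j : V) : H) = (ContinuousLinearMap.adjoint T) (T ((g j : V) : H)) := by
          rw [hSdef, ContinuousLinearMap.mul_apply, ContinuousLinearMap.star_eq_adjoint]
        rw [hS2, ContinuousLinearMap.adjoint_inner_right]
      rw [this, hgH j, inner_smul_right, orthonormal_iff_ite.mp hgon i j]
      by_cases hij : i = j <;> simp [hij]
    rw [orthonormal_iff_ite]
    intro k l
    rw [inner_smul_left, inner_smul_right, hTT k.1 l.1]
    rcases eq_or_ne k l with rfl | hkl
    · rw [if_pos rfl, if_pos rfl]
      have hs : (0:ℝ) < Real.sqrt (μ k.1) :=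
        Real.sqrt_pos.mpr (lt_of_le_of_ne (hμnn k.1) (Ne.symm k.2))
      have : (starRingEnd ℂ) (((Real.sqrt (μ k.1) : ℝ) : ℂ))⁻¹ = ((Real.sqrt (μ k.1) : ℝ) : ℂ)⁻¹ := by
        rw [map_inv₀, Complex.conj_ofReal]
      rw [this]
      rw [show ((μ k.1 : ℝ) : ℂ) = ((Real.sqrt (μ k.1) : ℝ) : ℂ) * ((Real.sqrt (μ k.1) : ℝ) : ℂ) by
        norm_cast; exact (Real.mul_self_sqrt (hμnn k.1)).symm]
      have hs' : ((Real.sqrt (μ k.1) : ℝ) : ℂ) ≠ 0 := by exact_mod_cast hs.ne'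
      field_simp
    · have : k.1 ≠ l.1 := fun h => hkl (Subtype.ext h)
      rw [if_neg this, if_neg hkl]
      simp
  · -- representation
    ext x
    rw [ContinuousLinearMap.sum_apply]
    have hterm : ∀ k : Subtype (fun i : Fin n => ¬ (μ i = 0)),
        ((Real.sqrt (μ k.1) : ℂ) • rk1 (((Real.sqrt (μ k.1) : ℂ))⁻¹ • T ((g k.1 : V) : H))
          (((g k.1 : V)) : H)) x
        = ⟪((g k.1 : V) : H), x⟫_ℂ • T ((g k.1 : V) : H) := by
      intro k
      have hs : ((Real.sqrt (μ k.1) : ℝ) : ℂ) ≠ 0 := by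
        have : (0:ℝ) < Real.sqrt (μ k.1) :=
          Real.sqrt_pos.mpr (lt_of_le_of_ne (hμnn k.1) (Ne.symm k.2))
        exact_mod_cast this.ne'
      simp only [ContinuousLinearMap.smul_apply, rk1_apply]
      rw [smul_smul, smul_smul]
      congr 1
      field_simp
    rw [Finset.sum_congr rfl (fun k _ => hterm k)]
    set y : H := ∑ k : Subtype (fun i : Fin n => ¬ (μ i = 0)), ⟪((g k.1 : V) : H), x⟫_ℂ • ((g k.1 : V) : H) with hy
    have hsum : ∑ k : Subtype (fun i : Fin n => ¬ (μ i = 0)), ⟪((g k.1 : V) : H), x⟫_ℂ • T ((g k.1 : V) : H)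
        = T y := by
      rw [hy, map_sum]
      refine Finset.sum_congr rfl fun k _ => ?_
      rw [map_smul]
    rw [hsum]
    -- T x = T y because S (x - y) = 0
    have hxy : S (x - y) = 0 := by
      rw [hSapp (x - y)]
      refine Finset.sum_eq_zero fun i _ => ?_
      rcases eq_or_ne (μ i) 0 with hzero | hne
      · rw [hzero]; simp
      · have hinner : ⟪((g i : V) : H), y⟫_ℂ = ⟪((g i : V) : H), x⟫_ℂ := by
          rw [hy, inner_sum]
          rw [Finset.sum_eq_single (⟨i, hne⟩ : Subtype (fun i : Fin n => ¬ (μ i = 0)))]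
          · rw [inner_smul_right, orthonormal_inner_self hgon, mul_one]
          · intro k _ hk
            have : (k.1 : Fin n) ≠ i := fun h => hk (Subtype.ext h)
            rw [inner_smul_right, orthonormal_iff_ite.mp hgon i k.1, if_neg (Ne.symm this),
              mul_zero]
          · intro h
            exact absurd (Finset.mem_univ _) h
        rw [inner_sub_right, hinner, sub_self]
        simp
    have hTxy : T (x - y) = 0 := by
      have h0 : ⟪T (x - y), T (x - y)⟫_ℂ = 0 := by
        have : ⟪T (x - y), T (x - y)⟫_ℂ = ⟪x - y, S (x - y)⟫_ℂ := by
          have hS2 : S (x - y) = (ContinuousLinearMap.adjoint T) (T (x - y)) := by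
            rw [hSdef, ContinuousLinearMap.mul_apply, ContinuousLinearMap.star_eq_adjoint]
          rw [hS2, ContinuousLinearMap.adjoint_inner_right]
        rw [this, hxy, inner_zero_right]
      rwa [inner_self_eq_zero] at h0
    have := sub_eq_zero.mp (by rwa [map_sub] at hTxy)
    exact this

end Chunk4
section Chunk5

variable {ι : Type*} (b : HilbertBasis ι ℂ H)

def IsFinRankProj' (P : H →L[ℂ] H) : Prop :=
  IsIdempotentElem P ∧ IsSelfAdjoint P ∧ FiniteDimensional ℂ (LinearMap.range (P : H →ₗ[ℂ] H))

lemma proj_apply_mem {P : H →L[ℂ] H} (hidem : IsIdempotentElem P) {y : H}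
    (hy : y ∈ LinearMap.range (P : H →ₗ[ℂ] H)) : P y = y := by
  obtain ⟨z, rfl⟩ := hy
  calc P (P z) = (P * P) z := rfl
    _ = P z := by rw [hidem]

lemma selfAdjoint_inner {P : H →L[ℂ] H} (hsa : IsSelfAdjoint P) (x y : H) :
    ⟪P x, y⟫_ℂ = ⟪x, P y⟫_ℂ :=
  (ContinuousLinearMap.isSelfAdjoint_iff_isSymmetric.mp hsa) x y

/-- an SVD for a finite-rank orthogonal projection, with all singular values 1 -/
def projSVD (P : H →L[ℂ] H) (hP : IsFinRankProj' P) : SVD P := by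
  haveI := hP.2.2
  set V := LinearMap.range (P : H →ₗ[ℂ] H) with hV
  set g := stdOrthonormalBasis ℂ V with hg
  have hgon : Orthonormal ℂ (fun i => ((g i : V) : H)) := by
    rw [orthonormal_iff_ite]
    intro i j
    have := orthonormal_iff_ite.mp g.orthonormal i j
    rwa [Submodule.coe_inner] at this
  refine ⟨Fin (Module.finrank ℂ V), inferInstance, fun _ => 1, fun _ => one_pos,
    fun k => ((g k : V) : H), fun k => ((g k : V) : H), hgon, hgon, ?_⟩
  ext x
  rw [ContinuousLinearMap.sum_apply]
  have hterm : ∀ k, (((1:ℝ) : ℂ) • rk1 ((g k : V) : H) ((g k : V) : H)) x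
      = ⟪((g k : V) : H), P x⟫_ℂ • ((g k : V) : H) := by
    intro k
    simp only [ContinuousLinearMap.smul_apply, rk1_apply, Complex.ofReal_one, one_smul]
    congr 1
    rw [← selfAdjoint_inner hP.2.1, proj_apply_mem hP.1 (g k).2]
  rw [Finset.sum_congr rfl fun k _ => hterm k]
  have := congrArg (fun (v : V) => (v : H)) (g.sum_repr' ⟨P x, ⟨x, rfl⟩⟩)
  simp only [AddSubmonoidClass.coe_finset_sum] at this
  conv_lhs => rw [← this]
  rfl

lemma trNorm_proj {P : H →L[ℂ] H} (hP : IsFinRankProj' P) :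
    trNorm b P = (Module.finrank ℂ (LinearMap.range (P : H →ₗ[ℂ] H)) : ℝ) := by
  rw [(projSVD P hP).trNorm_eq b]
  simp [projSVD]
  exact Finset.card_fin _

lemma hsNorm_proj {P : H →L[ℂ] H} (hP : IsFinRankProj' P) :
    hsNorm b P = Real.sqrt (Module.finrank ℂ (LinearMap.range (P : H →ₗ[ℂ] H)) : ℝ) := by
  rw [(projSVD P hP).hsNorm_eq b]
  simp [projSVD]
  exact Finset.card_fin _

lemma norm_proj_le_one {P : H →L[ℂ] H} (hidem : IsIdempotentElem P) (hsa : IsSelfAdjoint P) :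
    ‖P‖ ≤ 1 := by
  refine ContinuousLinearMap.opNorm_le_bound P zero_le_one fun x => ?_
  rw [one_mul]
  rcases eq_or_ne (P x) 0 with h0 | h0
  · rw [h0, norm_zero]; exact norm_nonneg x
  have h1 : ‖P x‖ ^ 2 = Complex.re ⟪P x, P x⟫_ℂ := by
    rw [inner_self_eq_norm_sq_to_K]; norm_cast
  have h2 : ⟪P x, P x⟫_ℂ = ⟪x, P x⟫_ℂ := by
    rw [selfAdjoint_inner hsa x (P x)]
    congr 1
    calc P (P x) = (P * P) x := rfl
      _ = P x := by rw [hidem]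
  have h3 : ‖P x‖ ^ 2 ≤ ‖x‖ * ‖P x‖ := by
    rw [h1, h2]
    calc Complex.re ⟪x, P x⟫_ℂ ≤ ‖⟪x, P x⟫_ℂ‖ := Complex.re_le_norm _
      _ ≤ ‖x‖ * ‖P x‖ := norm_inner_le_norm x (P x)
  have h4 : 0 < ‖P x‖ := norm_pos_iff.mpr h0
  nlinarith
  
lemma range_mul_le (B P : H →L[ℂ] H) :
    LinearMap.range ((B * P : H →L[ℂ] H) : H →ₗ[ℂ] H) ≤ Submodule.map (B : H →ₗ[ℂ] H) (LinearMap.range (P : H →ₗ[ℂ] H)) := by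
  rintro x ⟨y, rfl⟩
  exact ⟨P y, ⟨y, rfl⟩, rfl⟩

lemma finrank_range_mul_le (B P : H →L[ℂ] H) [FiniteDimensional ℂ (LinearMap.range (P : H →ₗ[ℂ] H))] :
    Module.finrank ℂ (LinearMap.range ((B * P : H →L[ℂ] H) : H →ₗ[ℂ] H)) ≤ Module.finrank ℂ (LinearMap.range (P : H →ₗ[ℂ] H)) := by
  haveI : FiniteDimensional ℂ (Submodule.map (B : H →ₗ[ℂ] H) (LinearMap.range (P : H →ₗ[ℂ] H))) :=
    Module.Finite.map _ _
  exact le_trans (Submodule.finrank_mono (range_mul_le B P)) (Submodule.finrank_map_le _ _)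

lemma findim_range_mul (B P : H →L[ℂ] H) [FiniteDimensional ℂ (LinearMap.range (P : H →ₗ[ℂ] H))] :
    FiniteDimensional ℂ (LinearMap.range ((B * P : H →L[ℂ] H) : H →ₗ[ℂ] H)) := by
  haveI : FiniteDimensional ℂ (Submodule.map (B : H →ₗ[ℂ] H) (LinearMap.range (P : H →ₗ[ℂ] H))) :=
    Module.Finite.map _ _
  exact Submodule.finiteDimensional_of_le (range_mul_le B P)

lemma trNorm_neg (Y : H →L[ℂ] H) : trNorm b (-Y) = trNorm b Y := by
  unfold trNorm
  rw [star_neg, neg_mul, mul_neg, neg_neg]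

lemma hsNorm_neg (Y : H →L[ℂ] H) : hsNorm b (-Y) = hsNorm b Y := by
  unfold hsNorm
  simp

lemma trNorm_star {Y : H →L[ℂ] H} (sv : SVD Y) : trNorm b (star Y) = trNorm b Y := by
  rw [sv.starSVD.trNorm_eq b, sv.trNorm_eq b]
  rfl

lemma hsNorm_star {Y : H →L[ℂ] H} (sv : SVD Y) : hsNorm b (star Y) = hsNorm b Y := by
  rw [sv.starSVD.hsNorm_eq b, sv.hsNorm_eq b]
  rfl

lemma trNorm_add {X₁ X₂ : H →L[ℂ] H} (sv₁ : SVD X₁) (sv₂ : SVD X₂)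
    (h12 : X₁ * star X₂ = 0) (h21 : star X₁ * X₂ = 0) :
    trNorm b (X₁ + X₂) = trNorm b X₁ + trNorm b X₂ := by
  rw [(sv₁.union sv₂ h12 h21).trNorm_eq b, sv₁.trNorm_eq b, sv₂.trNorm_eq b]
  show ∑ k : sv₁.κ ⊕ sv₂.κ, Sum.elim sv₁.s sv₂.s k = _
  rw [Fintype.sum_sum_type]
  rfl

lemma hsNorm_add_le {X₁ X₂ : H →L[ℂ] H} (sv₁ : SVD X₁) (sv₂ : SVD X₂)
    (h12 : X₁ * star X₂ = 0) (h21 : star X₁ * X₂ = 0) :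
    hsNorm b (X₁ + X₂) ≤ hsNorm b X₁ + hsNorm b X₂ := by
  have hsq : hsNorm b (X₁ + X₂) ^ 2 = hsNorm b X₁ ^ 2 + hsNorm b X₂ ^ 2 := by
    rw [(sv₁.union sv₂ h12 h21).hsNorm_sq b, sv₁.hsNorm_sq b, sv₂.hsNorm_sq b]
    show ∑ k : sv₁.κ ⊕ sv₂.κ, Sum.elim sv₁.s sv₂.s k ^ 2 = _
    rw [Fintype.sum_sum_type]
    rfl
  have h1 : 0 ≤ hsNorm b X₁ := hsNorm_nonneg b X₁
  have h2 : 0 ≤ hsNorm b X₂ := hsNorm_nonneg b X₂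
  have h3 : hsNorm b (X₁ + X₂) ^ 2 ≤ (hsNorm b X₁ + hsNorm b X₂) ^ 2 := by
    rw [hsq]; nlinarith
  calc hsNorm b (X₁ + X₂) = Real.sqrt (hsNorm b (X₁ + X₂) ^ 2) :=
        (Real.sqrt_sq (hsNorm_nonneg b _)).symm
    _ ≤ Real.sqrt ((hsNorm b X₁ + hsNorm b X₂) ^ 2) := Real.sqrt_le_sqrt h3
    _ = hsNorm b X₁ + hsNorm b X₂ := Real.sqrt_sq (by positivity)

lemma SVD.hsNorm_sq_le {X : H →L[ℂ] H} (sv : SVD X) :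
    hsNorm b X ^ 2 ≤ ‖X‖ * trNorm b X := by
  rw [sv.hsNorm_sq b, sv.trNorm_eq b, Finset.mul_sum]
  refine Finset.sum_le_sum fun k _ => ?_
  rw [pow_two]
  exact mul_le_mul_of_nonneg_right (sv.s_le_norm k) (sv.spos k).le

lemma SVD.trNorm_le {X : H →L[ℂ] H} (sv : SVD X) [FiniteDimensional ℂ (LinearMap.range (X : H →ₗ[ℂ] H))] :
    trNorm b X ≤ Real.sqrt (Module.finrank ℂ (LinearMap.range (X : H →ₗ[ℂ] H)) : ℝ) * hsNorm b X := by
  rw [sv.trNorm_eq b, sv.hsNorm_eq b]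
  calc ∑ k, sv.s k = ∑ k, sv.s k * 1 := by simp
    _ ≤ Real.sqrt (∑ k, sv.s k ^ 2) * Real.sqrt (∑ k : sv.κ, (1:ℝ) ^ 2) :=
        sum_mul_le_sqrt_mul_sqrt _ _ (fun k => (sv.spos k).le) (fun _ => zero_le_one)
    _ = Real.sqrt (Fintype.card sv.κ : ℝ) * Real.sqrt (∑ k, sv.s k ^ 2) := by
        rw [mul_comm]
        congr 2
        simp [Finset.card_univ]
    _ ≤ Real.sqrt (Module.finrank ℂ (LinearMap.range (X : H →ₗ[ℂ] H)) : ℝ) * Real.sqrt (∑ k, sv.s k ^ 2) := by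
        refine mul_le_mul_of_nonneg_right (Real.sqrt_le_sqrt ?_) (Real.sqrt_nonneg _)
        exact_mod_cast sv.card_le_finrank

end Chunk5
section Chunk6

variable {ι : Type*} (b : HilbertBasis ι ℂ H)

lemma corner_facts (A P : H →L[ℂ] H) (hP : IsFinRankProj' P) :
    (0 ≤ trNorm b ((1-P)*A*P)) ∧
    (trNorm b ((1-P)*A*P) ≤ trNorm b (A*P - P*A)) ∧
    (hsNorm b ((1-P)*A*P) ≤ hsNorm b (A*P - P*A)) ∧
    (trNorm b (A*P-P*A) ≤ trNorm b ((1-P)*A*P) + trNorm b ((1-P)*(star A)*P)) ∧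
    (hsNorm b (A*P-P*A) ≤ hsNorm b ((1-P)*A*P) + hsNorm b ((1-P)*(star A)*P)) ∧
    (hsNorm b ((1-P)*A*P)^2 ≤ ‖A‖ * trNorm b ((1-P)*A*P)) ∧
    (trNorm b ((1-P)*A*P)
      ≤ Real.sqrt (Module.finrank ℂ (LinearMap.range (P : H →ₗ[ℂ] H)) : ℝ) * hsNorm b ((1-P)*A*P)) := by
  classical
  obtain ⟨hidem, hsa, hfin⟩ := hP
  haveI := hfin
  have hQidem : IsIdempotentElem (1-P) := hidem.one_sub
  have hQsa : IsSelfAdjoint ((1:H →L[ℂ] H)-P) := (IsSelfAdjoint.one (H →L[ℂ] H)).sub hsa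
  have hQP : ((1:H →L[ℂ] H)-P) * P = 0 := by
    rw [sub_mul, one_mul, hidem.eq, sub_self]
  have hPQ : P * ((1:H →L[ℂ] H)-P) = 0 := by
    rw [mul_sub, mul_one, hidem.eq, sub_self]
  -- SVDs of the two corners
  haveI hfin1 : FiniteDimensional ℂ (LinearMap.range (((1-P)*A*P : H →L[ℂ] H) : H →ₗ[ℂ] H)) := findim_range_mul _ _
  haveI hfin2 : FiniteDimensional ℂ (LinearMap.range (((1-P)*(star A)*P : H →L[ℂ] H) : H →ₗ[ℂ] H)) := findim_range_mul _ _
  obtain ⟨sv₁⟩ := exists_svd ((1-P)*A*P) hfin1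
  obtain ⟨sv₂'⟩ := exists_svd ((1-P)*(star A)*P) hfin2
  -- the lower-left corner as a star
  have hEq : star ((1-P)*(star A)*P) = P*A*(1-P) := by
    simp [star_sub, star_one, hsa.star_eq, mul_assoc]
  have sv₂star : SVD (P*A*(1-P)) := by rw [← hEq]; exact sv₂'.starSVD
  have sv₂ : SVD (-(P*A*(1-P))) := sv₂star.neg
  -- orthogonality conditions
  have sandwich : ∀ U W : H →L[ℂ] H, (U * P) * ((1-P) * W) = 0 := by
    intro U W
    rw [mul_assoc U P ((1-P)*W), ← mul_assoc P (1-P) W, hPQ, zero_mul, mul_zero]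
  have sandwich' : ∀ U W : H →L[ℂ] H, (U * (1-P)) * (P * W) = 0 := by
    intro U W
    rw [mul_assoc U (1-P) (P*W), ← mul_assoc (1-P) P W, hQP, zero_mul, mul_zero]
  have h12 : ((1-P)*A*P) * star (-(P*A*(1-P))) = 0 := by
    have hst2 : star (-(P*A*((1:H →L[ℂ] H)-P))) = -((1-P) * (star A * P)) := by
      simp [star_sub, star_one, hsa.star_eq, mul_assoc]
    rw [hst2, mul_neg, neg_eq_zero]
    exact sandwich ((1-P)*A) (star A * P)
  have h21 : star ((1-P)*A*P) * (-(P*A*(1-P))) = 0 := by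
    have hst1 : star ((1-P)*A*P) = (P * star A) * ((1:H →L[ℂ] H)-P) := by
      rw [show (P * star A) * ((1:H →L[ℂ] H)-P) = P * (star A * (1-P)) from mul_assoc _ _ _]
      simp [star_sub, star_one, hsa.star_eq, mul_assoc]
    have hX2 : (P*A*((1:H →L[ℂ] H)-P)) = P * (A * (1-P)) := mul_assoc _ _ _
    rw [hst1, hX2, mul_neg, neg_eq_zero]
    exact sandwich' (P * star A) (A * (1-P))
  -- commutator decomposition
  have hcomm : A*P - P*A = ((1-P)*A*P) + (-(P*A*(1-P))) := by noncomm_ring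
  have svComm : SVD (A*P - P*A) := by rw [hcomm]; exact sv₁.union sv₂ h12 h21
  -- corner = (1-P) * commutator
  have hQc : (1-P) * (A*P - P*A) = (1-P)*A*P := by
    rw [mul_sub, ← mul_assoc, ← mul_assoc, hQP, zero_mul, sub_zero]
  have svQc : SVD ((1-P) * (A*P - P*A)) := by rw [hQc]; exact sv₁
  have hQnorm : ‖(1:H →L[ℂ] H)-P‖ ≤ 1 := norm_proj_le_one hQidem hQsa
  have hPnorm : ‖P‖ ≤ 1 := norm_proj_le_one hidem hsa
  refine ⟨sv₁.trNorm_nonneg b, ?_, ?_, ?_, ?_, ?_, ?_⟩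
  · calc trNorm b ((1-P)*A*P) = trNorm b ((1-P)*(A*P - P*A)) := by rw [hQc]
      _ ≤ ‖(1:H →L[ℂ] H)-P‖ * trNorm b (A*P - P*A) := trNorm_mul_le b svComm svQc
      _ ≤ 1 * trNorm b (A*P - P*A) :=
          mul_le_mul_of_nonneg_right hQnorm (svComm.trNorm_nonneg b)
      _ = trNorm b (A*P - P*A) := one_mul _
  · calc hsNorm b ((1-P)*A*P) = hsNorm b ((1-P)*(A*P - P*A)) := by rw [hQc]
      _ ≤ ‖(1:H →L[ℂ] H)-P‖ * hsNorm b (A*P - P*A) := hsNorm_mul_le b svComm _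
      _ ≤ 1 * hsNorm b (A*P - P*A) :=
          mul_le_mul_of_nonneg_right hQnorm (hsNorm_nonneg b _)
      _ = hsNorm b (A*P - P*A) := one_mul _
  · rw [hcomm, trNorm_add b sv₁ sv₂ h12 h21, trNorm_neg b, ← hEq, trNorm_star b sv₂']
  · calc hsNorm b (A*P-P*A) = hsNorm b (((1-P)*A*P) + (-(P*A*(1-P)))) := by rw [hcomm]
      _ ≤ hsNorm b ((1-P)*A*P) + hsNorm b (-(P*A*(1-P))) := hsNorm_add_le b sv₁ sv₂ h12 h21
      _ = hsNorm b ((1-P)*A*P) + hsNorm b ((1-P)*(star A)*P) := by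
          rw [hsNorm_neg b, ← hEq, hsNorm_star b sv₂']
  · calc hsNorm b ((1-P)*A*P)^2 ≤ ‖(1-P)*A*P‖ * trNorm b ((1-P)*A*P) := sv₁.hsNorm_sq_le b
      _ ≤ ‖A‖ * trNorm b ((1-P)*A*P) := by
          refine mul_le_mul_of_nonneg_right ?_ (sv₁.trNorm_nonneg b)
          calc ‖(1-P)*A*P‖ ≤ ‖(1-P)*A‖ * ‖P‖ := norm_mul_le _ _
            _ ≤ ‖(1-P)*A‖ * 1 := mul_le_mul_of_nonneg_left hPnorm (norm_nonneg _)
            _ = ‖(1-P)*A‖ := mul_one _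
            _ ≤ ‖(1:H →L[ℂ] H)-P‖ * ‖A‖ := norm_mul_le _ _
            _ ≤ 1 * ‖A‖ := mul_le_mul_of_nonneg_right hQnorm (norm_nonneg _)
            _ = ‖A‖ := one_mul _
  · calc trNorm b ((1-P)*A*P)
        ≤ Real.sqrt (Module.finrank ℂ (LinearMap.range (((1-P)*A*P : H →L[ℂ] H) : H →ₗ[ℂ] H)) : ℝ)
          * hsNorm b ((1-P)*A*P) := sv₁.trNorm_le b
      _ ≤ Real.sqrt (Module.finrank ℂ (LinearMap.range (P : H →ₗ[ℂ] H)) : ℝ) * hsNorm b ((1-P)*A*P) := by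
          refine mul_le_mul_of_nonneg_right (Real.sqrt_le_sqrt ?_) (hsNorm_nonneg b _)
          exact_mod_cast finrank_range_mul_le ((1-P)*A) P

lemma comm_norms_nonneg (A P : H →L[ℂ] H) (hP : IsFinRankProj' P) :
    0 ≤ trNorm b (A*P - P*A) ∧ 0 ≤ hsNorm b (A*P - P*A) := by
  have h := corner_facts b A P hP
  constructor
  · exact le_trans h.1 h.2.1
  · exact hsNorm_nonneg b _

end Chunk6
end FolnerAux

open FolnerAux

/-- for a selfadjoint set `𝒯` of operators and a sequence of non-zero
finite-rank orthogonal projections `{P n}`, the four commutator/corner conditions in the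
trace-class and Hilbert–Schmidt norms are equivalent, and each is equivalent to `{P n}`
being a Følner sequence for `𝒯`. -/
theorem folnerSeq_tfae_trace_and_hilbertSchmidt_conditions
    {H : Type*} [NormedAddCommGroup H] [InnerProductSpace ℂ H] [CompleteSpace H]
    {ι : Type*} [Countable ι] (b : HilbertBasis ι ℂ H)
    (𝒯 : Set (H →L[ℂ] H)) (h𝒯 : ∀ A ∈ 𝒯, star A ∈ 𝒯)
    (P : ℕ → H →L[ℂ] H) (hP : ∀ n, IsFinRankProj (P n) ∧ P n ≠ 0) :
    List.TFAE
      [∀ A ∈ 𝒯, Tendsto (fun n => trNorm b (A * P n - P n * A) / trNorm b (P n)) atTop (𝓝 0),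
       ∀ A ∈ 𝒯, Tendsto (fun n => hsNorm b (A * P n - P n * A) / hsNorm b (P n)) atTop (𝓝 0),
       ∀ A ∈ 𝒯, Tendsto (fun n => trNorm b ((1 - P n) * A * P n) / trNorm b (P n)) atTop (𝓝 0),
       ∀ A ∈ 𝒯, Tendsto (fun n => hsNorm b ((1 - P n) * A * P n) / hsNorm b (P n)) atTop (𝓝 0)]
    ∧ (IsFolnerSeq b 𝒯 P ↔
        ∀ A ∈ 𝒯, Tendsto (fun n => hsNorm b (A * P n - P n * A) / hsNorm b (P n)) atTop (𝓝 0)) := by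
  classical
  have hP' : ∀ n, IsFinRankProj' (P n) := fun n =>
    ⟨(hP n).1.1, (hP n).1.2.1, (hP n).1.2.2⟩
  set d : ℕ → ℝ := fun n => (Module.finrank ℂ (LinearMap.range (P n : H →ₗ[ℂ] H)) : ℝ) with hd
  have htrP : ∀ n, trNorm b (P n) = d n := fun n => trNorm_proj b (hP' n)
  have hhsP : ∀ n, hsNorm b (P n) = Real.sqrt (d n) := fun n => hsNorm_proj b (hP' n)
  have hd1 : ∀ n, 1 ≤ d n := by
    intro n
    haveI := (hP' n).2.2
    have hne : LinearMap.range (P n : H →ₗ[ℂ] H) ≠ ⊥ := by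
      intro hbot
      apply (hP n).2
      ext x
      have hx : P n x ∈ LinearMap.range (P n : H →ₗ[ℂ] H) := ⟨x, rfl⟩
      rw [hbot] at hx
      simpa using hx
    have h0 : Module.finrank ℂ (LinearMap.range (P n : H →ₗ[ℂ] H)) ≠ 0 := fun h =>
      hne (Submodule.finrank_eq_zero.mp h)
    have h1 : (1 : ℕ) ≤ Module.finrank ℂ (LinearMap.range (P n : H →ₗ[ℂ] H)) := Nat.one_le_iff_ne_zero.mpr h0
    show (1:ℝ) ≤ ((Module.finrank ℂ (LinearMap.range (P n : H →ₗ[ℂ] H)) : ℕ) : ℝ)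
    exact_mod_cast h1
  have hdpos : ∀ n, 0 < d n := fun n => lt_of_lt_of_le one_pos (hd1 n)
  have htrPpos : ∀ n, 0 < trNorm b (P n) := fun n => (htrP n) ▸ hdpos n
  have hhsPpos : ∀ n, 0 < hsNorm b (P n) := fun n => (hhsP n) ▸ Real.sqrt_pos.mpr (hdpos n)
  -- implications
  have h13 : (∀ A ∈ 𝒯, Tendsto (fun n => trNorm b (A * P n - P n * A) / trNorm b (P n))
      atTop (𝓝 0)) → ∀ A ∈ 𝒯, Tendsto (fun n => trNorm b ((1 - P n) * A * P n) / trNorm b (P n))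
      atTop (𝓝 0) := by
    intro h A hA
    refine squeeze_zero (fun n => div_nonneg (corner_facts b A (P n) (hP' n)).1 (htrPpos n).le)
      (fun n => ?_) (h A hA)
    exact (div_le_div_iff_of_pos_right (htrPpos n)).mpr (corner_facts b A (P n) (hP' n)).2.1
  have h31 : (∀ A ∈ 𝒯, Tendsto (fun n => trNorm b ((1 - P n) * A * P n) / trNorm b (P n))
      atTop (𝓝 0)) → ∀ A ∈ 𝒯, Tendsto (fun n => trNorm b (A * P n - P n * A) / trNorm b (P n))
      atTop (𝓝 0) := by
    intro h A hA
    have hg : Tendsto (fun n => trNorm b ((1 - P n) * A * P n) / trNorm b (P n)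
        + trNorm b ((1 - P n) * (star A) * P n) / trNorm b (P n)) atTop (𝓝 0) := by
      simpa using (h A hA).add (h (star A) (h𝒯 A hA))
    refine squeeze_zero (fun n => div_nonneg (comm_norms_nonneg b A (P n) (hP' n)).1
      (htrPpos n).le) (fun n => ?_) hg
    rw [← add_div]
    exact (div_le_div_iff_of_pos_right (htrPpos n)).mpr (corner_facts b A (P n) (hP' n)).2.2.2.1
  have h34 : (∀ A ∈ 𝒯, Tendsto (fun n => trNorm b ((1 - P n) * A * P n) / trNorm b (P n))
      atTop (𝓝 0)) → ∀ A ∈ 𝒯, Tendsto (fun n => hsNorm b ((1 - P n) * A * P n) / hsNorm b (P n))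
      atTop (𝓝 0) := by
    intro h A hA
    have hg : Tendsto (fun n => Real.sqrt (‖A‖ * (trNorm b ((1 - P n) * A * P n)
        / trNorm b (P n)))) atTop (𝓝 0) := by
      have := ((h A hA).const_mul ‖A‖).sqrt
      rwa [mul_zero, Real.sqrt_zero] at this
    refine squeeze_zero (fun n => div_nonneg (hsNorm_nonneg b _) (hhsPpos n).le)
      (fun n => ?_) hg
    have F := corner_facts b A (P n) (hP' n)
    refine (Real.le_sqrt (div_nonneg (hsNorm_nonneg b _) (hhsPpos n).le)
      (mul_nonneg (norm_nonneg A) (div_nonneg F.1 (htrPpos n).le))).mpr ?_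
    rw [hhsP n, htrP n, div_pow, Real.sq_sqrt (hdpos n).le, mul_div_assoc']
    exact (div_le_div_iff_of_pos_right (hdpos n)).mpr F.2.2.2.2.2.1
  have h43 : (∀ A ∈ 𝒯, Tendsto (fun n => hsNorm b ((1 - P n) * A * P n) / hsNorm b (P n))
      atTop (𝓝 0)) → ∀ A ∈ 𝒯, Tendsto (fun n => trNorm b ((1 - P n) * A * P n) / trNorm b (P n))
      atTop (𝓝 0) := by
    intro h A hA
    refine squeeze_zero (fun n => div_nonneg (corner_facts b A (P n) (hP' n)).1 (htrPpos n).le)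
      (fun n => ?_) (h A hA)
    have F := corner_facts b A (P n) (hP' n)
    rw [htrP n, hhsP n]
    have hstep : trNorm b ((1 - P n) * A * P n)
        ≤ Real.sqrt (d n) * hsNorm b ((1 - P n) * A * P n) := F.2.2.2.2.2.2
    calc trNorm b ((1 - P n) * A * P n) / d n
        ≤ (Real.sqrt (d n) * hsNorm b ((1 - P n) * A * P n)) / d n :=
          (div_le_div_iff_of_pos_right (hdpos n)).mpr hstep
      _ = hsNorm b ((1 - P n) * A * P n) / Real.sqrt (d n) := by
          rw [div_eq_div_iff (hdpos n).ne' (Real.sqrt_pos.mpr (hdpos n)).ne']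
          calc Real.sqrt (d n) * hsNorm b ((1 - P n) * A * P n) * Real.sqrt (d n)
              = hsNorm b ((1 - P n) * A * P n) * (Real.sqrt (d n) * Real.sqrt (d n)) := by ring
            _ = hsNorm b ((1 - P n) * A * P n) * d n := by rw [Real.mul_self_sqrt (hdpos n).le]
  have h24 : (∀ A ∈ 𝒯, Tendsto (fun n => hsNorm b (A * P n - P n * A) / hsNorm b (P n))
      atTop (𝓝 0)) → ∀ A ∈ 𝒯, Tendsto (fun n => hsNorm b ((1 - P n) * A * P n) / hsNorm b (P n))
      atTop (𝓝 0) := by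
    intro h A hA
    refine squeeze_zero (fun n => div_nonneg (hsNorm_nonneg b _) (hhsPpos n).le)
      (fun n => ?_) (h A hA)
    exact (div_le_div_iff_of_pos_right (hhsPpos n)).mpr (corner_facts b A (P n) (hP' n)).2.2.1
  have h42 : (∀ A ∈ 𝒯, Tendsto (fun n => hsNorm b ((1 - P n) * A * P n) / hsNorm b (P n))
      atTop (𝓝 0)) → ∀ A ∈ 𝒯, Tendsto (fun n => hsNorm b (A * P n - P n * A) / hsNorm b (P n))
      atTop (𝓝 0) := by
    intro h A hA
    have hg : Tendsto (fun n => hsNorm b ((1 - P n) * A * P n) / hsNorm b (P n)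
        + hsNorm b ((1 - P n) * (star A) * P n) / hsNorm b (P n)) atTop (𝓝 0) := by
      simpa using (h A hA).add (h (star A) (h𝒯 A hA))
    refine squeeze_zero (fun n => div_nonneg (hsNorm_nonneg b _) (hhsPpos n).le)
      (fun n => ?_) hg
    rw [← add_div]
    exact (div_le_div_iff_of_pos_right (hhsPpos n)).mpr (corner_facts b A (P n) (hP' n)).2.2.2.2.1
  constructor
  · tfae_have 1 → 3 := h13
    tfae_have 3 → 1 := h31
    tfae_have 3 → 4 := h34
    tfae_have 4 → 3 := h43
    tfae_have 2 → 4 := h24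
    tfae_have 4 → 2 := h42
    tfae_finish
  · exact ⟨fun h => h.2, fun h => ⟨hP, h⟩⟩
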